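/- No prediction rule beats Follow-the-Leader by much: there exist absolute constants c > 0, d > 0 and K₀ ∈ ℕ such that for every integer K ≥ K₀, every ε with 0 < ε < d, and every integer T with c·ln K/(2ε²) ≤ T ≤ c·ln K/ε², and every prediction rule p : Ω → ℝ^K (with p_k(ω) ≥ 0 and ∑_{k=1}^K p_k(ω) = 1 for all ω), there are at least ⌈K/3⌉ indices j ∈ {1,…,K} with E_{P_j}[p_j(ω)] ≤ 3/4. -/

import Mathlib

open MeasureTheory

/-- The Bernoulli measure on `Bool` with success probability `p` (for `p ∈ [0,1]`). -/
noncomputable def bern (p : ℝ) : Measure Bool :=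
  (PMF.bernoulli (min (Real.toNNReal p) 1) (min_le_right _ _)).toMeasure

/-- The lower-bound instance `I_j`: the product measure on `K × T` reward matrices
under which all entries are independent, entries of row `j` are Bernoulli((1+ε)/2),
and entries of every other row are Bernoulli(1/2). -/
noncomputable def lowerP (K T : ℕ) (ε : ℝ) (j : Fin K) :
    Measure (Fin K → Fin T → Bool) :=
  Measure.pi fun k => Measure.pi fun _ : Fin T =>
    bern (if k = j then (1 + ε) / 2 else 1 / 2)

/-- The number of wins `w_k(ω) = #{t : ω_{k,t} = 1}` of arm `k`. -/
def wins {K T : ℕ} (ω : Fin K → Fin T → Bool) (k : Fin K) : ℕ :=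
  (Finset.univ.filter fun t : Fin T => ω k t = true).card

/-- The Follow-the-Leader prediction: the smallest index maximizing `w_k(ω)`. -/
noncomputable def FTL {K T : ℕ} [NeZero K] (ω : Fin K → Fin T → Bool) : Fin K :=
  (Finset.univ.filter fun k : Fin K => ∀ k', wins ω k' ≤ wins ω k).min' (by
    obtain ⟨b, -, hb⟩ :=
      Finset.exists_max_image Finset.univ (wins ω) Finset.univ_nonempty
    exact ⟨b, Finset.mem_filter.mpr
      ⟨Finset.mem_univ b, fun k' => hb k' (Finset.mem_univ k')⟩⟩)

instance bern.instIsProbabilityMeasure (p : ℝ) : IsProbabilityMeasure (bern p) := by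
  unfold bern; infer_instance

instance lowerP.instIsProbabilityMeasure (K T : ℕ) (ε : ℝ) (j : Fin K) :
    IsProbabilityMeasure (lowerP K T ε j) := by
  unfold lowerP; infer_instance

lemma bern_singleton {p : ℝ} (h0 : 0 ≤ p) (h1 : p ≤ 1) (b : Bool) :
    bern p {b} = ENNReal.ofReal (if b then p else 1 - p) := by
  rw [bern, PMF.toMeasure_apply_singleton _ _ (measurableSet_singleton b)]
  have hmin : ((min (Real.toNNReal p) 1 : NNReal) : ENNReal) = ENNReal.ofReal p := by
    rw [min_eq_left (by simpa using h1)]; rfl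
  cases b with
  | false =>
      rw [if_neg (by simp), ENNReal.ofReal_sub 1 h0, ENNReal.ofReal_one]
      simp [PMF.bernoulli_apply, hmin]
  | true => simp [PMF.bernoulli_apply, hmin]

lemma lowerP_singleton_toReal {K T : ℕ} {ε : ℝ} (h0 : 0 ≤ ε) (h1 : ε ≤ 1) (j : Fin K)
    (ω : Fin K → Fin T → Bool) :
    (lowerP K T ε j {ω}).toReal
      = ∏ k, ∏ t, ((1 : ℝ)/2 * (if k = j then (if ω k t then 1 + ε else 1 - ε) else 1)) := by
  have hq0 : ∀ k : Fin K, 0 ≤ (if k = j then (1 + ε) / 2 else 1 / 2 : ℝ) := by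
    intro k; split <;> linarith
  have hq1 : ∀ k : Fin K, (if k = j then (1 + ε) / 2 else 1 / 2 : ℝ) ≤ 1 := by
    intro k; split <;> linarith
  rw [lowerP, ← Set.univ_pi_singleton ω, Measure.pi_pi]
  have hrow : ∀ k : Fin K,
      (Measure.pi fun _ : Fin T => bern (if k = j then (1 + ε) / 2 else 1 / 2)) {ω k}
        = ∏ t, ENNReal.ofReal (if ω k t then (if k = j then (1 + ε) / 2 else 1 / 2)
            else 1 - (if k = j then (1 + ε) / 2 else 1 / 2)) := by
    intro k
    rw [← Set.univ_pi_singleton (ω k), Measure.pi_pi]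
    exact Finset.prod_congr rfl fun t _ => bern_singleton (hq0 k) (hq1 k) _
  rw [Finset.prod_congr rfl fun k _ => hrow k, ENNReal.toReal_prod]
  refine Finset.prod_congr rfl fun k _ => ?_
  rw [ENNReal.toReal_prod]
  refine Finset.prod_congr rfl fun t _ => ?_
  rw [ENNReal.toReal_ofReal (by split <;> [exact hq0 k; linarith [hq1 k]])]
  split_ifs with h1' h2' <;> ring

lemma sum_prod_factor {K T : ℕ} (h : Fin K → Fin T → Bool → ℝ) :
    ∑ ω : Fin K → Fin T → Bool, ∏ k, ∏ t, h k t (ω k t)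
      = ∏ k, ∏ t, (h k t true + h k t false) := by
  have step1 : (∑ ω : Fin K → Fin T → Bool, ∏ k, ∏ t, h k t (ω k t))
      = ∏ k, ∑ r : Fin T → Bool, ∏ t, h k t (r t) :=
    (Fintype.prod_sum fun k (r : Fin T → Bool) => ∏ t, h k t (r t)).symm
  rw [step1]
  refine Finset.prod_congr rfl fun k _ => ?_
  have step2 : (∑ r : Fin T → Bool, ∏ t, h k t (r t)) = ∏ t, ∑ b : Bool, h k t b :=
    (Fintype.prod_sum fun t (b : Bool) => h k t b).symm
  rw [step2]
  exact Finset.prod_congr rfl fun t _ => by rw [Fintype.sum_bool]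

lemma prod_shape {K T : ℕ} (F : Bool → ℝ) (j : Fin K) (ω : Fin K → Fin T → Bool) :
    ∏ k, ∏ t, ((1 : ℝ)/2 * (if k = j then F (ω k t) else 1))
      = ((1 : ℝ)/2)^(T*K) * ∏ t, F (ω j t) := by
  have : ∀ k : Fin K, ∏ t, ((1 : ℝ)/2 * (if k = j then F (ω k t) else 1))
      = ((1 : ℝ)/2)^T * (if k = j then ∏ t, F (ω k t) else 1) := by
    intro k
    rw [Finset.prod_mul_distrib, Finset.prod_const, Finset.card_univ, Fintype.card_fin]
    congr 1
    split_ifs with h <;> simp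
  rw [Finset.prod_congr rfl fun k _ => this k, Finset.prod_mul_distrib, Finset.prod_const,
    Finset.card_univ, Fintype.card_fin, ← pow_mul, Finset.prod_ite_eq' Finset.univ j
      (fun k => ∏ t, F (ω k t)), if_pos (Finset.mem_univ j)]

lemma key_ineq {L pp M : ℝ} (hL : 0 ≤ L) (h0 : 0 ≤ pp) (h1 : pp ≤ 1) (hM : 0 < M) :
    L * pp ≤ M * pp + L^2 / M := by
  rw [← mul_le_mul_iff_of_pos_right hM]
  have hdm : L^2 / M * M = L^2 := div_mul_cancel₀ _ hM.ne'
  nlinarith [mul_nonneg h0 (sq_nonneg (L - M)), mul_nonneg (sub_nonneg.2 h1) (sq_nonneg L),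
    mul_nonneg (mul_nonneg h0 hL) hM.le]

lemma counting {K : ℕ} (E : Fin K → ℝ) (hEnn : ∀ j, 0 ≤ E j)
    (hsum : (∑ j, E j) ≤ (K : ℝ)/2) [DecidablePred fun j => E j ≤ 3/4] :
    ((K : ℝ)/3) ≤ (Finset.univ.filter fun j : Fin K => E j ≤ 3/4).card := by
  classical
  have hsplit : (Finset.univ.filter fun j : Fin K => E j ≤ 3/4).card
      + (Finset.univ.filter fun j : Fin K => ¬ (E j ≤ 3/4)).card = K := by
    rw [Finset.card_filter_add_card_filter_not, Finset.card_univ, Fintype.card_fin]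
  have hlow : ((Finset.univ.filter fun j : Fin K => ¬ (E j ≤ 3/4)).card : ℝ) * (3/4)
      ≤ ∑ j, E j := by
    calc ((Finset.univ.filter fun j : Fin K => ¬ (E j ≤ 3/4)).card : ℝ) * (3/4)
        = (Finset.univ.filter fun j : Fin K => ¬ (E j ≤ 3/4)).card • (3/4 : ℝ) := by
          rw [nsmul_eq_mul]
      _ ≤ ∑ j ∈ Finset.univ.filter fun j : Fin K => ¬ (E j ≤ 3/4), E j :=
          Finset.card_nsmul_le_sum _ _ _
            (fun j hj => le_of_lt (not_le.mp (Finset.mem_filter.mp hj).2))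
      _ ≤ ∑ j, E j :=
          Finset.sum_le_sum_of_subset_of_nonneg (Finset.filter_subset _ _)
            (fun j _ _ => hEnn j)
  have hcast : ((Finset.univ.filter fun j : Fin K => E j ≤ 3/4).card : ℝ)
      + ((Finset.univ.filter fun j : Fin K => ¬ (E j ≤ 3/4)).card : ℝ) = K := by
    exact_mod_cast congrArg (Nat.cast : ℕ → ℝ) hsplit
  linarith


open scoped Classical in
/-- **No prediction rule beats Follow-the-Leader by much.** There are absolute
constants `c, d > 0` and `K₀ ≥ 1` such that for every `K ≥ K₀`, every `0 < ε < d`,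
every horizon `T` with `c ln K / (2 ε²) ≤ T ≤ c ln K / ε²` and every prediction rule
`p`, at least `⌈K/3⌉` indices `j` satisfy `E_{P_j}[p_j(ω)] ≤ 3/4`. -/
theorem no_rule_beats_FTL :
    ∃ c > (0 : ℝ), ∃ d > (0 : ℝ), ∃ K₀ : ℕ, ∃ hK₀ : 1 ≤ K₀,
      ∀ K : ℕ, ∀ hK : K₀ ≤ K, ∀ ε : ℝ, 0 < ε → ε < d →
        ∀ T : ℕ, c * Real.log K / (2 * ε ^ 2) ≤ T → (T : ℝ) ≤ c * Real.log K / ε ^ 2 →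
          ∀ p : (Fin K → Fin T → Bool) → Fin K → ℝ,
            (∀ ω k, 0 ≤ p ω k) → (∀ ω, ∑ k, p ω k = 1) →
            Nat.ceil ((K : ℝ) / 3)
              ≤ (Finset.univ.filter fun j : Fin K =>
                  (∫ ω, p ω j ∂(lowerP K T ε j)) ≤ 3 / 4).card := by
  refine ⟨1/2, by norm_num, 1/2, by norm_num, 256, by norm_num, ?_⟩
  intro K hK ε hε0 hεd T _hT1 hT2 p hp0 hp1
  have hKR : (256 : ℝ) ≤ K := by exact_mod_cast hK
  have hK0 : (0 : ℝ) < K := by linarith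
  have hε1 : ε ≤ 1 := by linarith
  set g : Bool → ℝ := fun b => if b then 1 + ε else 1 - ε with hg
  have hp1' : ∀ ω k, p ω k ≤ 1 := by
    intro ω k
    calc p ω k ≤ ∑ k', p ω k' :=
          Finset.single_le_sum (fun k' _ => hp0 ω k') (Finset.mem_univ k)
      _ = 1 := hp1 ω
  set E : Fin K → ℝ := fun j => ∫ ω, p ω j ∂(lowerP K T ε j) with hE
  have hEeq : ∀ j, E j = ∑ ω : Fin K → Fin T → Bool,
      (lowerP K T ε j {ω}).toReal * p ω j := by
    intro j
    show (∫ ω, p ω j ∂(lowerP K T ε j)) = _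
    rw [integral_fintype (Integrable.of_finite)]
    simp only [smul_eq_mul, Measure.real]
  set BB : ℝ := ((1:ℝ)/2)^(T*K) with hBB
  have hBBpos : 0 < BB := by positivity
  set L : Fin K → (Fin K → Fin T → Bool) → ℝ := fun j ω => ∏ t, g (ω j t) with hL
  have hLnn : ∀ j ω, 0 ≤ L j ω := by
    intro j ω
    refine Finset.prod_nonneg fun t _ => ?_
    simp only [hg]; split <;> linarith
  have hA : ∀ j ω, (lowerP K T ε j {ω}).toReal = BB * L j ω := by
    intro j ω
    rw [lowerP_singleton_toReal hε0.le hε1 j ω]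
    exact prod_shape g j ω
  have hL2 : ∀ j : Fin K, (∑ ω : Fin K → Fin T → Bool, BB * (L j ω)^2) = (1 + ε^2)^T := by
    intro j
    have hpt : ∀ ω : Fin K → Fin T → Bool, BB * (L j ω)^2
        = ∏ k, ∏ t, ((1:ℝ)/2 * (if k = j then (g (ω k t))^2 else 1)) := by
      intro ω
      rw [prod_shape (fun b => (g b)^2) j ω]
      simp only [Finset.prod_pow]
      rfl
    have hfac := sum_prod_factor
      (fun (k : Fin K) (_t : Fin T) (b : Bool) => (1:ℝ)/2 * (if k = j then (g b)^2 else 1))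
    rw [Finset.sum_congr rfl fun ω _ => hpt ω, hfac]
    have h1 : ∀ k : Fin K, ∀ _t : Fin T,
        ((1:ℝ)/2 * (if k = j then (g true)^2 else 1)
          + (1:ℝ)/2 * (if k = j then (g false)^2 else 1))
        = if k = j then 1 + ε^2 else 1 := by
      have hgt : g true = 1 + ε := rfl
      have hgf : g false = 1 - ε := rfl
      intro k _t
      rw [hgt, hgf]
      by_cases hkj : k = j
      · rw [if_pos hkj, if_pos hkj, if_pos hkj]; ring
      · rw [if_neg hkj, if_neg hkj, if_neg hkj]; ring
    rw [Finset.prod_congr rfl fun k _ => Finset.prod_congr rfl fun t _ => h1 k t]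
    have h2 : ∀ k : Fin K, (∏ _t : Fin T, (if k = j then 1 + ε^2 else 1 : ℝ))
        = if k = j then (1 + ε^2)^T else 1 := by
      intro k; split_ifs <;> simp
    rw [Finset.prod_congr rfl fun k _ => h2 k,
      Finset.prod_ite_eq' Finset.univ j (fun _ => (1 + ε^2)^T), if_pos (Finset.mem_univ j)]
  have hBBsum : (∑ _ω : Fin K → Fin T → Bool, BB) = 1 := by
    rw [Finset.sum_const, Finset.card_univ, nsmul_eq_mul]
    have hcard : Fintype.card (Fin K → Fin T → Bool) = 2^(T*K) := by
      simp [pow_mul]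
    rw [hcard, hBB]
    push_cast
    rw [← mul_pow]
    norm_num
  have hMpos : (0:ℝ) < K/4 := by linarith
  have hEbound : (∑ j, E j) ≤ K/4 + 4 * (1 + ε^2)^T := by
    have step : ∀ j, E j ≤ (K/4) * (∑ ω : Fin K → Fin T → Bool, BB * p ω j)
        + (4/K) * (1 + ε^2)^T := by
      intro j
      rw [hEeq j, ← hL2 j, Finset.mul_sum, Finset.mul_sum, ← Finset.sum_add_distrib]
      refine Finset.sum_le_sum fun ω _ => ?_
      rw [hA]
      have hkey := key_ineq (hLnn j ω) (hp0 ω j) (hp1' ω j) hMpos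
      calc BB * L j ω * p ω j = BB * (L j ω * p ω j) := by ring
        _ ≤ BB * ((K/4) * p ω j + (L j ω)^2 / (K/4)) :=
            mul_le_mul_of_nonneg_left hkey hBBpos.le
        _ = (K/4) * (BB * p ω j) + (4/K) * (BB * (L j ω)^2) := by
            field_simp
    calc (∑ j, E j) ≤ ∑ j, ((K/4) * (∑ ω : Fin K → Fin T → Bool, BB * p ω j)
          + (4/K) * (1 + ε^2)^T) := Finset.sum_le_sum fun j _ => step j
      _ = (K/4) * (∑ ω : Fin K → Fin T → Bool, BB * (∑ j, p ω j))
          + (K : ℝ) * ((4/K) * (1+ε^2)^T) := by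
          rw [Finset.sum_add_distrib, Finset.sum_const, Finset.card_univ, Fintype.card_fin,
            ← Finset.mul_sum, Finset.sum_comm, nsmul_eq_mul]
          congr 2
          exact Finset.sum_congr rfl fun ω _ => (Finset.mul_sum _ _ _).symm
      _ = K/4 + 4 * (1+ε^2)^T := by
          rw [Finset.sum_congr rfl fun ω _ => by rw [hp1 ω, mul_one], hBBsum]
          field_simp
  have hx : (1+ε^2)^T ≤ Real.exp (ε^2 * T) := by
    calc (1+ε^2)^T ≤ (Real.exp (ε^2))^T :=
        pow_le_pow_left₀ (by positivity) (by linarith [Real.add_one_le_exp (ε^2)]) T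
      _ = Real.exp (ε^2 * T) := by rw [← Real.exp_nat_mul, mul_comm]
  have h2 : 2 * (ε^2 * T) ≤ Real.log K := by
    have hε2 : (0:ℝ) < ε^2 := by positivity
    have := (le_div_iff₀ hε2).mp hT2
    linarith
  have hxK : ((1+ε^2)^T)^2 ≤ K := by
    calc ((1+ε^2)^T)^2 ≤ (Real.exp (ε^2*T))^2 := pow_le_pow_left₀ (by positivity) hx 2
      _ = Real.exp (2*(ε^2*T)) := by rw [sq, ← Real.exp_add]; ring_nf
      _ ≤ Real.exp (Real.log K) := Real.exp_le_exp.mpr h2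
      _ = K := Real.exp_log hK0
  have h4x : 4 * (1+ε^2)^T ≤ K/4 := by
    have hxnn : (0:ℝ) ≤ (1+ε^2)^T := by positivity
    have hsq : (4 * (1+ε^2)^T)^2 ≤ ((K:ℝ)/4)^2 := by nlinarith
    exact (pow_le_pow_iff_left₀ (by positivity) (by positivity) two_ne_zero).mp hsq
  have hsum : (∑ j, E j) ≤ (K:ℝ)/2 := by linarith
  have hEnn : ∀ j, 0 ≤ E j := fun j => integral_nonneg (fun ω => hp0 ω j)
  rw [Nat.ceil_le]
  exact counting E hEnn hsum
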